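/- Let k be an algebraically closed field of characteristic p > 0 and let B ∈ M_{n×n}(k), C₀ ∈ M_{n×1}(k). Then the number of solutions in kⁿ of the Artin–Schreier system x = B·x^[p] + C₀ is exactly p^m for some m ∈ {0,…,n}. -/

import Mathlib

open Finset Polynomial
set_option linter.unusedSectionVars false

namespace ArtinSchreierAux

variable (p : ℕ) {k : Type*} [Field k] {n : ℕ} (B : Matrix (Fin n) (Fin n) k)

/-- The semilinear map `x ↦ B · x^[p]`. -/
def psi (x : Fin n → k) : Fin n → k := B.mulVec fun j => x j ^ p

lemma psi_apply (x : Fin n → k) (i : Fin n) : psi p B x i = ∑ j, B i j * x j ^ p := by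
  simp [psi, Matrix.mulVec, dotProduct]

variable [hp : Fact p.Prime] [CharP k p]

lemma psi_add (x y : Fin n → k) : psi p B (x + y) = psi p B x + psi p B y := by
  have h : (fun j => ((x + y) j) ^ p) = (fun j => x j ^ p) + fun j => y j ^ p := by
    funext j; simp [add_pow_char]
  simp only [psi, h, Matrix.mulVec_add]

lemma psi_smul (a : k) (x : Fin n → k) : psi p B (a • x) = (a ^ p) • psi p B x := by
  have h : (fun j => ((a • x) j) ^ p) = (a ^ p) • fun j => x j ^ p := by
    funext j; simp [mul_pow, smul_eq_mul]
  simp only [psi, h, Matrix.mulVec_smul]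

lemma psi_zero : psi p B 0 = 0 := by
  have h : (fun j => ((0 : Fin n → k) j) ^ p) = (0 : Fin n → k) := by
    funext j; simp [zero_pow hp.out.ne_zero]
  simp only [psi] at h ⊢
  rw [show (fun j => (0 : Fin n → k) j ^ p) = (0 : Fin n → k) from h, Matrix.mulVec_zero]

/-- `psi` as an additive monoid hom. -/
def psiHom : (Fin n → k) →+ (Fin n → k) := AddMonoidHom.mk' (psi p B) (psi_add p B)

lemma psiHom_apply (x : Fin n → k) : psiHom p B x = psi p B x := rfl

end ArtinSchreierAux
section
variable (p : ℕ) {k : Type*} [Field k] {n : ℕ} (B : Matrix (Fin n) (Fin n) k)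
variable [hp : Fact p.Prime] [CharP k p] [IsAlgClosed k]

open ArtinSchreierAux in
lemma ArtinSchreierAux.exists_sol (c : Fin n → k) : ∃ x : Fin n → k, x = psi p B x + c := by
  classical
  set v : ℕ → (Fin n → k) := fun i => (psi p B)^[i] c with hv
  have hnli : ¬ LinearIndependent k (fun i : Fin (n + 1) => v i) := by
    intro h
    have := h.fintype_card_le_finrank
    rw [Module.finrank_fintype_fun_eq_card] at this
    simp at this
  obtain ⟨g, hg, i₀, hi₀⟩ := Fintype.not_linearIndependent_iff.mp hnli
  set G : ℕ → k := fun i => if h : i < n + 1 then g ⟨i, h⟩ else 0 with hG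
  have hGsum : ∑ i ∈ Finset.range (n + 1), G i • v i = 0 := by
    rw [← Fin.sum_univ_eq_sum_range (fun i => G i • v i) (n + 1), ← hg]
    apply Finset.sum_congr rfl
    intro i _
    simp [hG, i.isLt, Nat.not_lt.mpr (Nat.lt_succ_iff.mp i.isLt)]
  have hGex : ∃ i, i ≤ n ∧ G i ≠ 0 := by
    refine ⟨i₀, by omega, ?_⟩
    simpa [hG, i₀.isLt, Nat.lt_succ_iff.mp i₀.isLt] using hi₀
  obtain ⟨iw, hiwn, hiw⟩ := hGex
  set m := Nat.findGreatest (fun i => G i ≠ 0) n with hmdef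
  have hGm : G m ≠ 0 := by
    have := Nat.findGreatest_spec (P := fun i => G i ≠ 0) hiwn hiw
    simpa [hmdef] using this
  have hmn : m ≤ n := Nat.findGreatest_le n
  have hGzero : ∀ i, m < i → i ≤ n → G i = 0 := by
    intro i h1 h2
    by_contra hne
    exact Nat.findGreatest_is_greatest (P := fun i => G i ≠ 0) (hmdef ▸ h1) h2 hne
  have hsum' : ∑ i ∈ Finset.range (m + 1), G i • v i = 0 := by
    rw [← hGsum]
    apply Finset.sum_subset
    · exact Finset.range_subset_range.mpr (by omega)
    · intro i hi hni
      rw [Finset.mem_range] at hi hni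
      rw [hGzero i (by omega) (by omega), zero_smul]
  rcases Nat.eq_zero_or_pos m with hm0 | hmpos
  · have h0 : G 0 • v 0 = 0 := by simpa [hm0] using hsum'
    have hc : c = 0 := by
      have hG0 : G 0 ≠ 0 := hm0 ▸ hGm
      have : v 0 = c := rfl
      rcases smul_eq_zero.mp h0 with h | h
      · exact absurd h hG0
      · rw [← this]; exact h
    exact ⟨0, by rw [psi_zero, hc]; simp⟩
  · obtain ⟨mm, hmm⟩ : ∃ mm, m = mm + 1 := ⟨m - 1, by omega⟩
    set a : ℕ → k := fun i => -(G i) / G m with ha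
    have hkey : v m = ∑ i ∈ Finset.range m, a i • v i := by
      rw [Finset.sum_range_succ] at hsum'
      have h1 : G m • v m = -∑ i ∈ Finset.range m, G i • v i :=
        eq_neg_of_add_eq_zero_right hsum'
      calc v m = (G m)⁻¹ • (G m • v m) := by
            rw [smul_smul, inv_mul_cancel₀ hGm, one_smul]
        _ = (G m)⁻¹ • (-∑ i ∈ Finset.range m, G i • v i) := by rw [h1]
        _ = ∑ i ∈ Finset.range m, a i • v i := by
            rw [smul_neg, Finset.smul_sum, ← Finset.sum_neg_distrib]
            apply Finset.sum_congr rfl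
            intro i _
            rw [smul_smul, ← neg_smul, ha]
            congr 1
            field_simp
    clear hsum' hGsum hGzero hi₀ hg
    -- the auxiliary polynomials
    set s : ℕ → Polynomial k := fun i =>
      Nat.rec (Polynomial.C (a 0) * Polynomial.X + 1)
        (fun i si => si ^ p + Polynomial.C (a (i + 1)) * Polynomial.X) i with hs
    have hs0 : s 0 = Polynomial.C (a 0) * Polynomial.X + 1 := rfl
    have hssucc : ∀ i, s (i + 1) = s i ^ p + Polynomial.C (a (i + 1)) * Polynomial.X :=
      fun i => rfl
    set P : Polynomial k := Polynomial.expand k p (s mm) - Polynomial.X with hP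
    have hPc : P.coeff 1 = -1 := by
      rw [hP, Polynomial.coeff_sub, Polynomial.coeff_expand hp.out.pos, if_neg,
        Polynomial.coeff_X_one]
      · ring
      · intro h
        exact hp.out.one_lt.ne' (Nat.dvd_one.mp h)
    have hP0 : P ≠ 0 := fun h => by simp [h] at hPc
    have hPdeg : P.degree ≠ 0 := by
      intro h
      have h1 : 1 ≤ P.natDegree :=
        Polynomial.le_natDegree_of_ne_zero (by rw [hPc]; exact neg_ne_zero.mpr one_ne_zero)
      rw [Polynomial.degree_eq_natDegree hP0] at h
      have : P.natDegree = 0 := by exact_mod_cast h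
      omega
    obtain ⟨θ, hθ⟩ := IsAlgClosed.exists_root P hPdeg
    have hθ' : (s mm).eval (θ ^ p) = θ := by
      rw [Polynomial.IsRoot, hP, Polynomial.eval_sub, Polynomial.expand_eval,
        Polynomial.eval_X, sub_eq_zero] at hθ
      exact hθ
    set u : ℕ → k := fun i => (s i).eval (θ ^ p) with hu
    have hu0 : u 0 = a 0 * θ ^ p + 1 := by simp [hu, hs0]
    have husucc : ∀ i, u (i + 1) = u i ^ p + a (i + 1) * θ ^ p := fun i => by
      simp [hu, hssucc i]
    have humm : u mm = θ := hθ'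
    refine ⟨∑ i ∈ Finset.range m, u i • v i, ?_⟩
    have hpsi_sum : psi p B (∑ i ∈ Finset.range m, u i • v i)
        = ∑ i ∈ Finset.range m, (u i ^ p) • v (i + 1) := by
      rw [← psiHom_apply, map_sum]
      apply Finset.sum_congr rfl
      intro i _
      rw [psiHom_apply, psi_smul]
      congr 1
      exact (Function.iterate_succ_apply' (psi p B) i c).symm
    rw [hpsi_sum]
    have hvzero : v 0 = c := rfl
    have hLHS : ∑ i ∈ Finset.range m, u i • v i
        = (∑ i ∈ Finset.range mm, (u i ^ p) • v (i + 1))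
          + ((∑ i ∈ Finset.range mm, (θ ^ p * a (i + 1)) • v (i + 1))
            + ((θ ^ p * a 0) • v 0 + v 0)) := by
      rw [hmm, Finset.sum_range_succ']
      have e1 : ∀ i, u (i + 1) • v (i + 1)
          = (u i ^ p) • v (i + 1) + (θ ^ p * a (i + 1)) • v (i + 1) := by
        intro i; rw [husucc i, add_smul, mul_comm (a (i + 1))]
      have e2 : u 0 • v 0 = (θ ^ p * a 0) • v 0 + v 0 := by
        rw [hu0, add_smul, one_smul, mul_comm]
      rw [Finset.sum_congr rfl (fun i _ => e1 i), e2, Finset.sum_add_distrib]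
      abel
    have hRHS : (∑ i ∈ Finset.range m, (u i ^ p) • v (i + 1)) + c
        = (∑ i ∈ Finset.range mm, (u i ^ p) • v (i + 1))
          + ((∑ i ∈ Finset.range mm, (θ ^ p * a (i + 1)) • v (i + 1))
            + ((θ ^ p * a 0) • v 0 + v 0)) := by
      have hstep : ∑ i ∈ Finset.range m, (u i ^ p) • v (i + 1)
          = (∑ i ∈ Finset.range mm, (u i ^ p) • v (i + 1)) + θ ^ p • v m := by
        rw [hmm, Finset.sum_range_succ, humm, ← hmm]
      have hsm : θ ^ p • v m = ∑ i ∈ Finset.range m, (θ ^ p * a i) • v i := by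
        rw [hkey, Finset.smul_sum]
        apply Finset.sum_congr rfl
        intro i _
        rw [smul_smul]
      have hsplit : ∑ i ∈ Finset.range m, (θ ^ p * a i) • v i
          = (∑ i ∈ Finset.range mm, (θ ^ p * a (i + 1)) • v (i + 1))
            + (θ ^ p * a 0) • v 0 := by
        rw [hmm, Finset.sum_range_succ']
      rw [hstep, hsm, hsplit, ← hvzero]
      abel
    rw [hLHS, hRHS]
end
namespace ArtinSchreierAux
section
variable {p : ℕ} [hp : Fact p.Prime] {k : Type*} [Field k] [CharP k p] [Algebra (ZMod p) k]

lemma eq_algebraMap_of_pow_eq {x : k} (hx : x ^ p = x) :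
    ∃ a : ZMod p, algebraMap (ZMod p) k a = x := by
  classical
  set f : Polynomial k := Polynomial.X ^ p - Polynomial.X with hf
  have hfc : f.coeff p = 1 := by
    rw [hf, Polynomial.coeff_sub, Polynomial.coeff_X_pow, if_pos rfl, Polynomial.coeff_X,
      if_neg (fun hh => hp.out.one_lt.ne' hh.symm), sub_zero]
  have hf0 : f ≠ 0 := fun h => by simp [h] at hfc
  have hdeg : f.natDegree ≤ p := by
    refine le_trans (Polynomial.natDegree_sub_le _ _) ?_
    have h1p : 1 ≤ p := hp.out.pos
    simp [Polynomial.natDegree_X_pow, Polynomial.natDegree_X, h1p]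
  have hroots_card : f.roots.toFinset.card ≤ p :=
    le_trans (Multiset.toFinset_card_le _) (le_trans (Polynomial.card_roots' f) hdeg)
  have hinj : Function.Injective (algebraMap (ZMod p) k) := (algebraMap (ZMod p) k).injective
  set I : Finset k := Finset.univ.image (algebraMap (ZMod p) k) with hI
  have hIcard : I.card = p := by
    rw [hI, Finset.card_image_of_injective _ hinj, Finset.card_univ, ZMod.card]
  have hroot : ∀ a : ZMod p, f.IsRoot (algebraMap (ZMod p) k a) := by
    intro a
    have : (algebraMap (ZMod p) k a) ^ p = algebraMap (ZMod p) k a := by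
      rw [← map_pow, ZMod.pow_card]
    simp [hf, Polynomial.IsRoot, this]
  have hsub : I ⊆ f.roots.toFinset := by
    intro y hy
    obtain ⟨a, _, rfl⟩ := Finset.mem_image.mp hy
    rw [Multiset.mem_toFinset, Polynomial.mem_roots hf0]
    exact hroot a
  have hIR : I = f.roots.toFinset :=
    Finset.eq_of_subset_of_card_le hsub (by rw [hIcard]; exact hroots_card)
  have hxmem : x ∈ f.roots.toFinset := by
    rw [Multiset.mem_toFinset, Polynomial.mem_roots hf0]
    simp [hf, Polynomial.IsRoot, hx]
  rw [← hIR] at hxmem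
  obtain ⟨a, _, ha⟩ := Finset.mem_image.mp hxmem
  exact ⟨a, ha⟩

variable {n : ℕ} (B : Matrix (Fin n) (Fin n) k)

lemma li_over_k {ι : Type*} (v : ι → Fin n → k) (hfix : ∀ i, psi p B (v i) = v i)
    (hli : LinearIndependent (ZMod p) v) : LinearIndependent k v := by
  classical
  rw [linearIndependent_iff'] at hli ⊢
  intro s
  induction s using Finset.strongInduction with
  | _ s ih =>
    intro g hsum
    by_contra hcon
    push_neg at hcon
    obtain ⟨i₀, hi₀s, hi₀⟩ := hcon
    set h : ι → k := fun i => g i / g i₀ with hh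
    have hhi₀ : h i₀ = 1 := by rw [hh]; exact div_self hi₀
    have hsum' : ∑ i ∈ s, h i • v i = 0 := by
      have := congrArg (fun z => (g i₀)⁻¹ • z) hsum
      simpa [Finset.smul_sum, smul_smul, hh, div_eq_inv_mul] using this
    have hfr : ∑ i ∈ s, (h i ^ p) • v i = 0 := by
      have hvec : ∑ i ∈ s, (h i ^ p) • (fun jj => v i jj ^ p) = (0 : Fin n → k) := by
        funext jj
        have hcoordsum : ∑ i ∈ s, h i * v i jj = 0 := by
          have := congrFun hsum' jj
          simpa [Finset.sum_apply] using this
        have : (∑ i ∈ s, h i * v i jj) ^ p = 0 := by rw [hcoordsum]; exact zero_pow hp.out.ne_zero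
        rw [sum_pow_char] at this
        simpa [Finset.sum_apply, mul_pow] using this
      have := congrArg (Matrix.mulVecLin B) hvec
      rw [map_sum, map_zero] at this
      simp only [map_smul, Matrix.mulVecLin_apply] at this
      have hrw : ∀ i, B.mulVec (fun jj => v i jj ^ p) = v i := fun i => hfix i
      simpa [hrw] using this
    have hsub : ∑ i ∈ s.erase i₀, (h i ^ p - h i) • v i = 0 := by
      have htot : ∑ i ∈ s, (h i ^ p - h i) • v i = 0 := by
        have : ∑ i ∈ s, ((h i ^ p) • v i - h i • v i) = 0 := by
          rw [Finset.sum_sub_distrib, hfr, hsum', sub_zero]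
        simpa [sub_smul] using this
      rw [← htot]
      apply Finset.sum_erase
      rw [hhi₀, one_pow, sub_self, zero_smul]
    have hall : ∀ i ∈ s.erase i₀, h i ^ p - h i = 0 :=
      ih (s.erase i₀) (Finset.erase_ssubset hi₀s) _ hsub
    have hfix' : ∀ i ∈ s, h i ^ p = h i := by
      intro i hi
      by_cases hii : i = i₀
      · rw [hii, hhi₀, one_pow]
      · have := hall i (Finset.mem_erase.mpr ⟨hii, hi⟩)
        exact sub_eq_zero.mp this
    have hchoice : ∀ i : ι, ∃ a : ZMod p, algebraMap (ZMod p) k a = if i ∈ s then h i else 0 := by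
      intro i
      by_cases hi : i ∈ s
      · simpa [hi] using eq_algebraMap_of_pow_eq (hfix' i hi)
      · exact ⟨0, by simp [hi]⟩
    choose φ hφ using hchoice
    have hzrel : ∑ i ∈ s, φ i • v i = 0 := by
      have : ∀ i ∈ s, φ i • v i = h i • v i := by
        intro i hi
        rw [← algebraMap_smul k (φ i) (v i), hφ i, if_pos hi]
      rw [Finset.sum_congr rfl this]
      exact hsum'
    have hφi₀ : φ i₀ = 0 := hli s φ hzrel i₀ hi₀s
    have : (1 : k) = 0 := by
      have := hφ i₀
      rw [hφi₀, if_pos hi₀s, hhi₀] at this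
      simp only [map_zero] at this
      exact this.symm
    simp at this

end
end ArtinSchreierAux
/-- Over an algebraically closed field `k` of characteristic `p > 0`, the number of solutions
in `kⁿ` of the Artin–Schreier system `x = B·x^[p] + C₀` is exactly `p ^ m` for some
`m ∈ {0, …, n}`. -/
theorem artin_schreier_card_solutions
    (p : ℕ) (hp : p.Prime) (k : Type*) [Field k] [IsAlgClosed k] [CharP k p]
    (n : ℕ) (B : Matrix (Fin n) (Fin n) k) (C₀ : Fin n → k) :
    ∃ m : ℕ, m ≤ n ∧
      Nat.card {x : Fin n → k // ∀ i, x i = (∑ j, B i j * (x j) ^ p) + C₀ i} = p ^ m := by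
  classical
  haveI : Fact p.Prime := ⟨hp⟩
  letI : Algebra (ZMod p) k := ZMod.algebra k p
  have hchar : ∀ x : Fin n → k,
      (∀ i, x i = (∑ j, B i j * (x j) ^ p) + C₀ i) ↔ x = ArtinSchreierAux.psi p B x + C₀ := by
    intro x
    constructor
    · intro hx; funext i; rw [hx i]; simp [ArtinSchreierAux.psi_apply]
    · intro hx i; rw [congrFun hx i]; simp [ArtinSchreierAux.psi_apply]
  obtain ⟨x₀, hx₀⟩ := ArtinSchreierAux.exists_sol p B C₀
  set F : (Fin n → k) →+ (Fin n → k) :=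
    AddMonoidHom.mk' (fun x => x - ArtinSchreierAux.psi p B x)
      (fun x y => by
        show (x + y) - ArtinSchreierAux.psi p B (x + y)
            = (x - ArtinSchreierAux.psi p B x) + (y - ArtinSchreierAux.psi p B y)
        rw [ArtinSchreierAux.psi_add]; abel) with hF
  set L : (Fin n → k) →ₗ[ZMod p] (Fin n → k) := F.toZModLinearMap p with hL
  have hLapp : ∀ x, L x = x - ArtinSchreierAux.psi p B x := fun x => rfl
  set K := LinearMap.ker L with hK
  have hmemK : ∀ x : Fin n → k, x ∈ K ↔ ArtinSchreierAux.psi p B x = x := by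
    intro x; rw [hK, LinearMap.mem_ker, hLapp, sub_eq_zero]; exact eq_comm
  have hsolchar : ∀ x : Fin n → k,
      (∀ i, x i = (∑ j, B i j * (x j) ^ p) + C₀ i) ↔ L x = C₀ := by
    intro x; rw [hchar x, hLapp, sub_eq_iff_eq_add']
  have hx₀' : L x₀ = C₀ := by rw [hLapp, sub_eq_iff_eq_add']; exact hx₀
  have e : {x : Fin n → k // ∀ i, x i = (∑ j, B i j * (x j) ^ p) + C₀ i} ≃ K := by
    have hmem1 : ∀ t : {x : Fin n → k // ∀ i, x i = (∑ j, B i j * (x j) ^ p) + C₀ i},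
        t.1 - x₀ ∈ K := by
      intro t
      rw [hK, LinearMap.mem_ker, map_sub, (hsolchar t.1).mp t.2, hx₀', sub_self]
    have hmem2 : ∀ y : K, ∀ i, (y.1 + x₀) i = (∑ j, B i j * ((y.1 + x₀) j) ^ p) + C₀ i := by
      intro y
      rw [hsolchar, map_add, LinearMap.mem_ker.mp y.2, hx₀', zero_add]
    exact
      { toFun := fun t => ⟨t.1 - x₀, hmem1 t⟩
        invFun := fun y => ⟨y.1 + x₀, hmem2 y⟩
        left_inv := fun t => Subtype.ext (by simp)
        right_inv := fun y => Subtype.ext (by simp) }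
  have hbound : ∀ s : Finset K, (LinearIndependent (ZMod p) fun i : s => (i : K)) →
      s.card ≤ n := by
    intro s hs
    have h2 : LinearIndependent (ZMod p) fun i : s => ((i : K) : Fin n → k) :=
      hs.map' K.subtype (Submodule.ker_subtype K)
    have h3 : LinearIndependent k fun i : s => ((i : K) : Fin n → k) :=
      ArtinSchreierAux.li_over_k B (fun i : s => ((i : K) : Fin n → k))
        (fun i => (hmemK _).mp (i : K).2) h2
    have h4 := h3.fintype_card_le_finrank
    rwa [Module.finrank_fintype_fun_eq_card, Fintype.card_coe, Fintype.card_fin] at h4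
  have hrank : Module.rank (ZMod p) K ≤ n := rank_le hbound
  haveI : Module.Free (ZMod p) K := Module.Free.of_divisionRing (ZMod p) K
  haveI : Module.Finite (ZMod p) K :=
    Module.rank_lt_aleph0_iff.mp (lt_of_le_of_lt hrank (Cardinal.nat_lt_aleph0 n))
  haveI : Finite K := Module.finite_of_finite (ZMod p)
  haveI : Fintype K := Fintype.ofFinite K
  refine ⟨Module.finrank (ZMod p) K, Module.finrank_le_of_rank_le hrank, ?_⟩
  rw [Nat.card_congr e, Nat.card_eq_fintype_card,
    Module.card_eq_pow_finrank (K := ZMod p) (V := K), ZMod.card]
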